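/- Let H be an n-vertex C4-free Halin graph with characteristic tree T. If every longest path in T has length exactly 5, then 3 divides n − 2 and e(H) = 5(n−2)/3 + 1. -/

import Mathlib

open SimpleGraph

/-- Degree of a vertex as the `ncard` of its neighbour set. -/
noncomputable def ncDeg {V : Type*} (G : SimpleGraph V) (v : V) : ℕ :=
  (G.neighborSet v).ncard

/-- A leaf is a vertex of degree one. -/
def IsLeaf {V : Type*} (G : SimpleGraph V) (v : V) : Prop :=
  ncDeg G v = 1

/-- A Halin graph, presented by its characteristic tree `T` and outer cycle `C`.
The underlying graph is `T ⊔ C`.  The outer cycle is a `2`-regular connected graph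
whose support is exactly the set of leaves of `T`, every non-leaf of `T` has degree
at least three, and the cycle is compatible with a planar embedding: for every edge
`uv` of `T`, the leaves lying in each component of `T - uv` are consecutive on the
cycle, i.e. they induce a connected subgraph of the cycle. -/
structure HalinGraph (V : Type*) [Fintype V] : Type _ where
  /-- the characteristic tree -/
  T : SimpleGraph V
  /-- the outer cycle -/
  C : SimpleGraph V
  tree_isTree : T.IsTree
  four_le_card : 4 ≤ Fintype.card V
  nonleaf_degree : ∀ v : V, ¬ IsLeaf T v → 3 ≤ ncDeg T v
  support_C : C.support = {v : V | IsLeaf T v}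
  two_regular : ∀ v ∈ C.support, ncDeg C v = 2
  cycle_connected : (C.induce C.support).Connected
  planar : ∀ u v : V, T.Adj u v →
    (C.induce {x : V | IsLeaf T x ∧ (T.deleteEdges {s(u, v)}).Reachable u x}).Connected

/-- The Halin graph itself: the (edge-disjoint) union of the tree and the outer cycle. -/
def HalinGraph.graph {V : Type*} [Fintype V] (H : HalinGraph V) : SimpleGraph V :=
  H.T ⊔ H.C

/-- Number of edges of a graph. -/
noncomputable def eCount {V : Type*} (G : SimpleGraph V) : ℕ :=
  G.edgeSet.ncard

/-- A graph is `C₄`-free iff it contains no cycle of length `4`. -/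
def C4Free {V : Type*} (G : SimpleGraph V) : Prop :=
  ∀ (v : V) (w : G.Walk v v), w.IsCycle → w.length ≠ 4

/-- A semi-branching vertex of the characteristic tree: a non-leaf with at least one
leaf neighbour and at least two non-leaf neighbours. -/
def SemiBranching {V : Type*} (T : SimpleGraph V) (v : V) : Prop :=
  ¬ IsLeaf T v ∧ (∃ x, T.Adj v x ∧ IsLeaf T x) ∧
    ∃ x y : V, x ≠ y ∧ T.Adj v x ∧ T.Adj v y ∧ ¬ IsLeaf T x ∧ ¬ IsLeaf T y

section Aux
variable {V : Type*}

private lemma leaf_nbr {T : SimpleGraph V} {v : V} (h : IsLeaf T v) :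
    ∃ m, T.neighborSet v = {m} := Set.ncard_eq_one.mp h

private lemma leaf_unique {T : SimpleGraph V} {v m x : V} (h : IsLeaf T v)
    (hm : T.Adj v m) (hx : T.Adj v x) : x = m := by
  obtain ⟨w, hw⟩ := leaf_nbr h
  have h1 : m ∈ T.neighborSet v := hm
  have h2 : x ∈ T.neighborSet v := hx
  rw [hw, Set.mem_singleton_iff] at h1 h2
  rw [h1, h2]

private lemma not_leaf_of_two {T : SimpleGraph V} {v x y : V} (hx : T.Adj v x)
    (hy : T.Adj v y) (hxy : x ≠ y) : ¬ IsLeaf T v :=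
  fun h => hxy (leaf_unique h hy hx)

private lemma leaf_ne_nonleaf {T : SimpleGraph V} {x y : V} (hx : IsLeaf T x)
    (hy : ¬ IsLeaf T y) : x ≠ y := fun h => hy (h ▸ hx)

private lemma head_edge {G : SimpleGraph V} {v a x : V} (q : G.Walk v a)
    (hq : q.IsPath) (he : s(v, x) ∈ q.edges) : x = q.getVert 1 := by
  cases q with
  | nil => simp at he
  | cons h q' =>
    rw [Walk.edges_cons, List.mem_cons] at he
    rcases he with he | he
    · rw [Sym2.congr_right] at he
      subst he
      simp [Walk.getVert_cons_succ, Walk.getVert_zero]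
    · exact absurd (Walk.fst_mem_support_of_mem_edges q' he)
        (by rw [Walk.cons_isPath_iff] at hq; exact hq.2)

private lemma ext_path [Fintype V] {T : SimpleGraph V} (hac : T.IsAcyclic)
    {a v : V} (p : T.Walk a v) (hp : p.IsPath)
    (hdeg : 2 ≤ (T.neighborSet v).ncard) :
    ∃ x, T.Adj v x ∧ x ∉ p.support := by
  classical
  have hfin : (T.neighborSet v).Finite := Set.toFinite _
  obtain ⟨x, y, hx, hy, hxy⟩ := (Set.one_lt_ncard_iff hfin).mp (by omega)
  have key : ∀ z, T.Adj v z → z ∈ p.support → z = p.reverse.getVert 1 := by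
    intro z hz hzs
    have hq : (p.dropUntil z hzs).IsPath := hp.dropUntil hzs
    have hzv : z ≠ v := hz.ne'
    have hsingle : (Walk.cons hz.symm Walk.nil : T.Walk z v).IsPath := by
      simp [hzv]
    have huniq := hac.path_unique ⟨p.dropUntil z hzs, hq⟩
      ⟨Walk.cons hz.symm Walk.nil, hsingle⟩
    have hwalk : p.dropUntil z hzs = Walk.cons hz.symm Walk.nil :=
      congrArg Subtype.val huniq
    have hedge : s(z, v) ∈ p.edges := by
      have := p.edges_dropUntil_subset hzs
      apply this
      rw [hwalk]
      simp
    have hrev : s(v, z) ∈ p.reverse.edges := by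
      rw [Walk.edges_reverse, List.mem_reverse, Sym2.eq_swap]
      exact hedge
    exact head_edge p.reverse hp.reverse hrev
  by_contra hno
  push_neg at hno
  have hx' := key x hx (hno x hx)
  have hy' := key y hy (hno y hy)
  exact hxy (hx'.trans hy'.symm)




private lemma no_triangle {T : SimpleGraph V} (hac : T.IsAcyclic) {x y z : V}
    (h1 : T.Adj x y) (h2 : T.Adj y z) (h3 : T.Adj x z) : False := by
  have hxy := h1.ne
  have hyz := h2.ne
  have hxz := h3.ne
  apply hac (Walk.cons h1 (Walk.cons h2 (Walk.cons h3.symm Walk.nil)))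
  rw [Walk.isCycle_def, Walk.isTrail_def]
  refine ⟨?_, by simp, ?_⟩
  · simp only [Walk.edges_cons, Walk.edges_nil, List.nodup_cons, List.mem_cons,
      List.not_mem_nil, or_false, List.nodup_nil, and_true, Sym2.eq_iff]
    push_neg
    repeat' apply And.intro
    all_goals tauto
  · simp only [Walk.support_cons, Walk.support_nil, List.tail_cons]
    simp [hyz, hxz.symm, hxy.symm]

private lemma no_c4 {G : SimpleGraph V} (hfree : C4Free G) {a b c d : V}
    (h1 : G.Adj a b) (h2 : G.Adj b c) (h3 : G.Adj c d) (h4 : G.Adj d a)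
    (hac : a ≠ c) (hbd : b ≠ d) : False := by
  have hab := h1.ne
  have hbc := h2.ne
  have hcd := h3.ne
  have hda := h4.ne
  have hcyc : (Walk.cons h1 (Walk.cons h2 (Walk.cons h3 (Walk.cons h4 Walk.nil)))).IsCycle := by
    rw [Walk.isCycle_def, Walk.isTrail_def]
    refine ⟨?_, by simp, ?_⟩
    · simp only [Walk.edges_cons, Walk.edges_nil, List.nodup_cons, List.mem_cons,
        List.not_mem_nil, or_false, List.nodup_nil, and_true, Sym2.eq_iff]
      push_neg
      repeat' apply And.intro
      all_goals tauto
    · simp only [Walk.support_cons, Walk.support_nil, List.tail_cons]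
      simp [hbc, hbd, hab.symm, hcd, hac.symm, hda]
  exact hfree a _ hcyc (by simp)

private lemma not_adj_of_leaf_leaf [Fintype V] {T : SimpleGraph V} (hconn : T.Connected)
    (hcard : 3 ≤ Fintype.card V) {z m : V} (hz : IsLeaf T z) (hm : IsLeaf T m) :
    ¬ T.Adj z m := by
  classical
  intro hadj
  have hcard2 : ({z, m} : Finset V).card ≤ 2 := Finset.card_le_two ..
  have hsd : (Finset.univ \ ({z, m} : Finset V)).Nonempty := by
    rw [← Finset.card_pos, Finset.card_sdiff_of_subset (Finset.subset_univ _)]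
    have : Finset.univ.card = Fintype.card V := rfl
    omega
  obtain ⟨w, hw⟩ := hsd
  simp only [Finset.mem_sdiff, Finset.mem_univ, Finset.mem_insert, Finset.mem_singleton,
    true_and, not_or] at hw
  obtain ⟨hwz, hwm⟩ := hw
  obtain ⟨wlk⟩ := hconn.preconnected z w
  have hpath := wlk.toPath.2
  set q := (wlk.toPath : T.Walk z w) with hqdef
  clear_value q
  cases q with
  | nil => exact hwz rfl
  | cons h q' =>
    rename_i y
    have hym : y = m := leaf_unique hz hadj h
    subst hym
    cases q' with
    | nil => exact hwm rfl
    | cons h' q'' =>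
      rename_i y'
      have hy' : y' = z := leaf_unique hm hadj.symm h'
      subst hy'
      rw [Walk.cons_isPath_iff] at hpath
      exact hpath.2 (by simp)

private lemma not_reach_across {T : SimpleGraph V} (hac : T.IsAcyclic) {c1 c2 : V}
    (h : T.Adj c1 c2) : ¬ (T.deleteEdges {s(c1, c2)}).Reachable c1 c2 := by
  classical
  intro hr
  obtain ⟨w⟩ := hr
  set D := T.deleteEdges {s(c1, c2)} with hD
  have hq0 : (w.toPath : D.Walk c1 c2).IsPath := w.toPath.2
  have hqe : ∀ e ∈ (w.toPath : D.Walk c1 c2).edges, e ∈ T.edgeSet := by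
    intro e he
    have := (w.toPath : D.Walk c1 c2).edges_subset_edgeSet he
    exact (edgeSet_subset_edgeSet.mpr (deleteEdges_le _)) this
  set q := (w.toPath : D.Walk c1 c2).transfer T hqe with hq'
  have hq : q.IsPath := hq0.transfer hqe
  have hsingle : (Walk.cons h Walk.nil : T.Walk c1 c2).IsPath := by simp [h.ne]
  have huniq := hac.path_unique ⟨q, hq⟩ ⟨Walk.cons h Walk.nil, hsingle⟩
  have hwalk : q = Walk.cons h Walk.nil := congrArg Subtype.val huniq
  have hmem : s(c1, c2) ∈ (w.toPath : D.Walk c1 c2).edges := by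
    have : s(c1, c2) ∈ q.edges := by rw [hwalk]; simp
    rwa [hq', Walk.edges_transfer] at this
  have := (w.toPath : D.Walk c1 c2).edges_subset_edgeSet hmem
  rw [mem_edgeSet, hD, deleteEdges_adj] at this
  simp at this

private lemma reach_step {T : SimpleGraph V} {c1 c2 : V} :
    ∀ {x y : V} (_ : T.Walk x y),
      ((T.deleteEdges {s(c1, c2)}).Reachable c1 y ∨ (T.deleteEdges {s(c1, c2)}).Reachable c2 y) →
      ((T.deleteEdges {s(c1, c2)}).Reachable c1 x ∨ (T.deleteEdges {s(c1, c2)}).Reachable c2 x) := by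
  intro x y w
  induction w with
  | nil => exact id
  | @cons a b c hadj w ih =>
    intro hend
    rcases ih hend with hr | hr
    · by_cases he : s(a, b) = s(c1, c2)
      · rw [Sym2.eq_iff] at he
        rcases he with ⟨h1, _⟩ | ⟨h1, _⟩
        · exact Or.inl (by rw [h1])
        · exact Or.inr (by rw [h1])
      · exact Or.inl (hr.trans (Adj.reachable (by
          rw [deleteEdges_adj]; exact ⟨hadj, by simpa using he⟩)).symm)
    · by_cases he : s(a, b) = s(c1, c2)
      · rw [Sym2.eq_iff] at he
        rcases he with ⟨h1, _⟩ | ⟨h1, _⟩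
        · exact Or.inl (by rw [h1])
        · exact Or.inr (by rw [h1])
      · exact Or.inr (hr.trans (Adj.reachable (by
          rw [deleteEdges_adj]; exact ⟨hadj, by simpa using he⟩)).symm)

private lemma reach_or_reach {T : SimpleGraph V} (hconn : T.Connected) {c1 c2 : V} (v : V) :
    (T.deleteEdges {s(c1, c2)}).Reachable c1 v ∨ (T.deleteEdges {s(c1, c2)}).Reachable c2 v := by
  obtain ⟨w⟩ := hconn.preconnected v c1
  exact reach_step w (Or.inl (Reachable.refl _))


private lemma middle_adj [Fintype V] {T : SimpleGraph V} (htree : T.IsTree)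
    (hdeg : ∀ v : V, ¬ IsLeaf T v → 3 ≤ ncDeg T v)
    (hmax : ∀ (a b : V) (p : T.Walk a b), p.IsPath → p.length ≤ 5)
    {u2 u3 u4 u5 : V} (h23 : T.Adj u2 u3) (h34 : T.Adj u3 u4) (h45 : T.Adj u4 u5)
    (h42 : u4 ≠ u2) (h52 : u5 ≠ u2) (h53 : u5 ≠ u3)
    {m : V} (hm : ¬ IsLeaf T m) (hmne : m ≠ u2)
    (hr : (T.deleteEdges {s(u2, u3)}).Reachable u2 m) : T.Adj u2 m := by
  classical
  set D := T.deleteEdges {s(u2, u3)} with hD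
  obtain ⟨w⟩ := hr
  have hq0 : (w.toPath : D.Walk u2 m).IsPath := w.toPath.2
  have hqe : ∀ e ∈ (w.toPath : D.Walk u2 m).edges, e ∈ T.edgeSet := by
    intro e he
    exact (edgeSet_subset_edgeSet.mpr (deleteEdges_le _))
      ((w.toPath : D.Walk u2 m).edges_subset_edgeSet he)
  set q := (w.toPath : D.Walk u2 m).transfer T hqe with hqdef
  have hq : q.IsPath := hq0.transfer hqe
  have hsupp : q.support = (w.toPath : D.Walk u2 m).support := Walk.support_transfer _ hqe
  have hreach : ∀ x ∈ q.support, D.Reachable u2 x := by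
    intro x hx
    rw [hsupp] at hx
    exact ⟨(w.toPath : D.Walk u2 m).takeUntil x hx⟩
  have hnr := not_reach_across htree.IsAcyclic h23
  have h3s : u3 ∉ q.support := fun hx => hnr (hreach _ hx)
  have hDadj34 : D.Adj u3 u4 := by
    rw [hD, deleteEdges_adj]
    refine ⟨h34, ?_⟩
    simp only [Set.mem_singleton_iff, Sym2.eq_iff]
    push_neg
    constructor
    · intro h; exact absurd h h23.ne'
    · intro _; exact h42
  have hDadj45 : D.Adj u4 u5 := by
    rw [hD, deleteEdges_adj]
    refine ⟨h45, ?_⟩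
    simp only [Set.mem_singleton_iff, Sym2.eq_iff]
    push_neg
    constructor
    · intro h; exact absurd h h42
    · intro h; exact absurd h h34.ne'
  have h4s : u4 ∉ q.support := fun hx => hnr ((hreach _ hx).trans hDadj34.reachable.symm)
  have h5s : u5 ∉ q.support := fun hx =>
    hnr ((hreach _ hx).trans (hDadj34.reachable.trans hDadj45.reachable).symm)
  set W : T.Walk u5 m := Walk.cons h45.symm (Walk.cons h34.symm (Walk.cons h23.symm q)) with hWdef
  have hW : W.IsPath := by
    rw [hWdef, Walk.cons_isPath_iff, Walk.cons_isPath_iff, Walk.cons_isPath_iff]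
    refine ⟨⟨⟨hq, h3s⟩, ?_⟩, ?_⟩
    · simp only [Walk.support_cons, List.mem_cons]
      push_neg
      exact ⟨h34.ne', h4s⟩
    · simp only [Walk.support_cons, List.mem_cons]
      push_neg
      exact ⟨h45.ne', h53, h5s⟩
  by_contra hadj
  have hql : 2 ≤ q.length := by
    rcases Nat.lt_or_ge q.length 2 with hlt | hge
    · interval_cases hq' : q.length
      · exact absurd (Walk.eq_of_length_eq_zero hq').symm hmne
      · exact absurd (Walk.adj_of_length_eq_one hq') hadj
    · exact hge
  have hWlen : W.length = q.length + 3 := by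
    rw [hWdef]; simp [Walk.length_cons]
  have hdm : 2 ≤ (T.neighborSet m).ncard := le_trans (by norm_num) (hdeg m hm)
  obtain ⟨x, hxadj, hxs⟩ := ext_path htree.IsAcyclic W hW hdm
  have hP : (Walk.cons hxadj.symm W.reverse).IsPath := by
    rw [Walk.cons_isPath_iff]
    refine ⟨hW.reverse, ?_⟩
    rw [Walk.support_reverse, List.mem_reverse]
    exact hxs
  have := hmax _ _ _ hP
  simp only [Walk.length_cons, Walk.length_reverse] at this
  omega

private lemma middle_nbrs_leaf [Fintype V] {T : SimpleGraph V} (htree : T.IsTree)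
    (hdeg : ∀ v : V, ¬ IsLeaf T v → 3 ≤ ncDeg T v)
    (hmax : ∀ (a b : V) (p : T.Walk a b), p.IsPath → p.length ≤ 5)
    {u2 u3 u4 u5 : V} (h23 : T.Adj u2 u3) (h34 : T.Adj u3 u4) (h45 : T.Adj u4 u5)
    (h42 : u4 ≠ u2) (h52 : u5 ≠ u2) (h53 : u5 ≠ u3)
    {m y : V} (hm : ¬ IsLeaf T m) (hmne : m ≠ u2)
    (hr : (T.deleteEdges {s(u2, u3)}).Reachable u2 m)
    (hy : T.Adj m y) (hyne : y ≠ u2) : IsLeaf T y := by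
  by_contra hyl
  have hnr := not_reach_across htree.IsAcyclic h23
  have hm2 : T.Adj u2 m := middle_adj htree hdeg hmax h23 h34 h45 h42 h52 h53 hm hmne hr
  have hmne3 : m ≠ u3 := fun h => hnr (h ▸ hr)
  have hedge : s(m, y) ≠ s(u2, u3) := by
    intro hcontra
    rw [Sym2.eq_iff] at hcontra
    rcases hcontra with ⟨h1, _⟩ | ⟨h1, _⟩
    · exact hmne h1
    · exact hmne3 h1
  have hry : (T.deleteEdges {s(u2, u3)}).Reachable u2 y :=
    hr.trans (Adj.reachable (by rw [deleteEdges_adj]; exact ⟨hy, by simpa using hedge⟩))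
  have hy2 : T.Adj u2 y := middle_adj htree hdeg hmax h23 h34 h45 h42 h52 h53 hyl hyne hry
  exact no_triangle htree.IsAcyclic hm2 hy hy2

private lemma middle_reach_set [Fintype V] {T : SimpleGraph V} (htree : T.IsTree)
    (hdeg : ∀ v : V, ¬ IsLeaf T v → 3 ≤ ncDeg T v)
    (hmax : ∀ (a b : V) (p : T.Walk a b), p.IsPath → p.length ≤ 5)
    {u2 u3 u4 u5 : V} (h23 : T.Adj u2 u3) (h34 : T.Adj u3 u4) (h45 : T.Adj u4 u5)
    (h42 : u4 ≠ u2) (h52 : u5 ≠ u2) (h53 : u5 ≠ u3)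
    {m : V} (hm : ¬ IsLeaf T m) (hmne : m ≠ u2)
    (hr : (T.deleteEdges {s(u2, u3)}).Reachable u2 m) :
    {x : V | IsLeaf T x ∧ (T.deleteEdges {s(m, u2)}).Reachable m x}
      = {y : V | T.Adj m y ∧ y ≠ u2} := by
  classical
  have hBleaf : ∀ y, T.Adj m y → y ≠ u2 → IsLeaf T y := fun y hy hyne =>
    middle_nbrs_leaf htree hdeg hmax h23 h34 h45 h42 h52 h53 hm hmne hr hy hyne
  ext x
  simp only [Set.mem_setOf_eq]
  constructor
  · rintro ⟨hxleaf, hxr⟩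
    set D' := T.deleteEdges {s(m, u2)} with hD'
    obtain ⟨w⟩ := hxr
    have hpath := w.toPath.2
    set q := (w.toPath : D'.Walk m x) with hqdef
    clear_value q
    cases q with
    | nil => exact absurd hxleaf (by simpa using hm)
    | cons h q' =>
      rename_i y0
      rw [hD', deleteEdges_adj] at h
      have hy0ne : y0 ≠ u2 := by
        intro he
        apply h.2
        rw [he]
        exact rfl
      have hy0leaf : IsLeaf T y0 := hBleaf y0 h.1 hy0ne
      cases q' with
      | nil => exact ⟨h.1, hy0ne⟩
      | cons h' q'' =>
        rename_i z0
        have hz0 : z0 = m := by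
          have : T.Adj y0 z0 := by
            rw [hD', deleteEdges_adj] at h'
            exact h'.1
          exact leaf_unique hy0leaf h.1.symm this
        rw [Walk.cons_isPath_iff] at hpath
        refine absurd ?_ hpath.2
        rw [← hz0, Walk.support_cons]
        exact List.mem_cons_of_mem _ q''.start_mem_support
  · rintro ⟨hadj, hne⟩
    refine ⟨hBleaf x hadj hne, Adj.reachable ?_⟩
    rw [deleteEdges_adj]
    refine ⟨hadj, ?_⟩
    simp only [Set.mem_singleton_iff, Sym2.eq_iff]
    push_neg
    exact ⟨fun _ => hne, fun h => absurd h hmne⟩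

private lemma crossing {G : SimpleGraph V} {S : Set V} (hconn : (G.induce S).Connected)
    (A : Set V) {x y : V} (hx : x ∈ S) (hxA : x ∈ A) (hy : y ∈ S) (hyA : y ∉ A) :
    ∃ u v : V, u ∈ S ∧ v ∈ S ∧ u ∈ A ∧ v ∉ A ∧ G.Adj u v := by
  obtain ⟨w⟩ := hconn.preconnected ⟨x, hx⟩ ⟨y, hy⟩
  obtain ⟨d, _, hdA, hdB⟩ := w.exists_boundary_dart {s : ↥S | (s : V) ∈ A} hxA hyA
  refine ⟨d.fst, d.snd, d.fst.2, d.snd.2, hdA, hdB, ?_⟩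
  have := d.adj
  rwa [comap_adj] at this

private lemma exists_mid {G : SimpleGraph V} {S : Set V} (hconn : (G.induce S).Connected)
    (hfin : S.Finite) (h3 : 3 ≤ S.ncard) :
    ∃ x y z : V, x ∈ S ∧ y ∈ S ∧ z ∈ S ∧ x ≠ z ∧ G.Adj x y ∧ G.Adj y z := by
  classical
  have hadj : ∀ u v : ↥S, u ≠ v →
      (∃ x y z : V, x ∈ S ∧ y ∈ S ∧ z ∈ S ∧ x ≠ z ∧ G.Adj x y ∧ G.Adj y z)
        ∨ (G.induce S).Adj u v := by
    intro u v huv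
    obtain ⟨w⟩ := hconn.preconnected u v
    have hpath := w.toPath.2
    set q := (w.toPath : (G.induce S).Walk u v) with hqdef
    clear_value q
    cases q with
    | nil => exact absurd rfl huv
    | cons h q' =>
      rename_i b
      cases q' with
      | nil => exact Or.inr h
      | cons h' q'' =>
        rename_i c
        left
        rw [Walk.cons_isPath_iff] at hpath
        have huc : u ≠ c := by
          intro he
          apply hpath.2
          rw [he, Walk.support_cons]
          exact List.mem_cons_of_mem _ q''.start_mem_support
        have h1 : G.Adj u b := by have := h; rwa [comap_adj] at this
        have h2 : G.Adj b c := by have := h'; rwa [comap_adj] at this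
        exact ⟨u, b, c, u.2, b.2, c.2, fun he => huc (Subtype.ext he), h1, h2⟩
  obtain ⟨a, ha, b, hb, c, hc, hab, hac, hbc⟩ := (Set.two_lt_ncard hfin).mp (by omega)
  rcases hadj ⟨a, ha⟩ ⟨b, hb⟩ (fun he => hab (congrArg Subtype.val he)) with hdone | hab'
  · exact hdone
  rcases hadj ⟨a, ha⟩ ⟨c, hc⟩ (fun he => hac (congrArg Subtype.val he)) with hdone | hac'
  · exact hdone
  have h1 : G.Adj b a := by have := hab'; rw [comap_adj] at this; exact this.symm
  have h2 : G.Adj a c := by have := hac'; rwa [comap_adj] at this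
  exact ⟨b, a, c, hb, ha, hc, hbc, h1, h2⟩

private lemma center_no_leaf [Fintype V] {T C : SimpleGraph V} (htree : T.IsTree)
    (hdeg : ∀ v : V, ¬ IsLeaf T v → 3 ≤ ncDeg T v)
    (hmax : ∀ (a b : V) (p : T.Walk a b), p.IsPath → p.length ≤ 5)
    (hcard : 3 ≤ Fintype.card V)
    (hfree : C4Free (T ⊔ C))
    {u0 u1 u2 u3 u4 u5 : V}
    (h01 : T.Adj u0 u1) (h12 : T.Adj u1 u2) (h23 : T.Adj u2 u3)
    (h34 : T.Adj u3 u4) (h45 : T.Adj u4 u5)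
    (hnd : ([u0, u1, u2, u3, u4, u5] : List V).Nodup)
    (hplanar : (C.induce
      {x : V | IsLeaf T x ∧ (T.deleteEdges {s(u2, u3)}).Reachable u2 x}).Connected) :
    ∀ x, IsLeaf T x → ¬ T.Adj u2 x := by
  classical
  simp only [List.nodup_cons, List.mem_cons, List.not_mem_nil, or_false, List.mem_singleton,
    not_or, List.nodup_nil, and_true] at hnd
  obtain ⟨⟨hd01, hd02, hd03, hd04, hd05⟩, ⟨hd12, hd13, hd14, hd15⟩,
    ⟨hd23, hd24, hd25⟩, ⟨hd34, hd35⟩, hd45⟩ := hnd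
  intro x hxleaf hxadj
  set D := T.deleteEdges {s(u2, u3)} with hD
  set S1 := {x : V | IsLeaf T x ∧ D.Reachable u2 x} with hS1
  -- basic non-leaf facts
  have hu1 : ¬ IsLeaf T u1 := not_leaf_of_two h12 h01.symm (Ne.symm hd02)
  have hu2 : ¬ IsLeaf T u2 := not_leaf_of_two h23 h12.symm (Ne.symm hd13)
  have hu3 : ¬ IsLeaf T u3 := not_leaf_of_two h34 h23.symm (Ne.symm hd24)
  -- u0 is a leaf
  set P : T.Walk u0 u5 :=
    Walk.cons h01 (Walk.cons h12 (Walk.cons h23 (Walk.cons h34 (Walk.cons h45 Walk.nil))))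
    with hP0
  have hP : P.IsPath := by
    rw [Walk.isPath_def, hP0]
    simp only [Walk.support_cons, Walk.support_nil, List.nodup_cons, List.mem_cons,
      List.not_mem_nil, or_false, List.mem_singleton, not_or, List.nodup_nil, and_true]
    exact ⟨⟨hd01, hd02, hd03, hd04, hd05⟩, ⟨hd12, hd13, hd14, hd15⟩,
      ⟨hd23, hd24, hd25⟩, ⟨hd34, hd35⟩, hd45⟩
  have hu0 : IsLeaf T u0 := by
    by_contra hu0
    have hdm : 2 ≤ (T.neighborSet u0).ncard := le_trans (by norm_num) (hdeg u0 hu0)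
    obtain ⟨y, hyadj, hys⟩ := ext_path htree.IsAcyclic P.reverse hP.reverse hdm
    have hP2 : (Walk.cons hyadj.symm P).IsPath := by
      rw [Walk.cons_isPath_iff]
      refine ⟨hP, ?_⟩
      rwa [Walk.support_reverse, List.mem_reverse] at hys
    have := hmax _ _ _ hP2
    rw [Walk.length_cons, hP0] at this
    simp [Walk.length_cons] at this
  -- x ∈ S1
  have hxne3 : x ≠ u3 := leaf_ne_nonleaf hxleaf hu3
  have hxS1 : x ∈ S1 := by
    refine ⟨hxleaf, Adj.reachable ?_⟩
    rw [hD, deleteEdges_adj]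
    refine ⟨hxadj, ?_⟩
    simp only [Set.mem_singleton_iff, Sym2.eq_iff]
    push_neg
    exact ⟨fun _ => hxne3, fun h => absurd h hd23⟩
  -- u0 ∈ S1 \ A
  have hu0S1 : u0 ∈ S1 := by
    refine ⟨hu0, ?_⟩
    have hadj1 : D.Adj u2 u1 := by
      rw [hD, deleteEdges_adj]
      refine ⟨h12.symm, ?_⟩
      simp only [Set.mem_singleton_iff, Sym2.eq_iff]
      push_neg
      exact ⟨fun _ => hd13, fun h => absurd h hd23⟩
    have hadj0 : D.Adj u1 u0 := by
      rw [hD, deleteEdges_adj]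
      refine ⟨h01.symm, ?_⟩
      simp only [Set.mem_singleton_iff, Sym2.eq_iff]
      push_neg
      exact ⟨fun h => absurd h hd12, fun h => absurd h hd13⟩
    exact (hadj1.reachable).trans hadj0.reachable
  have hu0A : ¬ T.Adj u2 u0 := by
    intro hadj
    exact hd12 (leaf_unique hu0 h01 hadj.symm).symm
  -- crossing
  obtain ⟨z1, z2, hz1S, hz2S, hz1A, hz2A, hCadj⟩ :=
    crossing hplanar {z : V | T.Adj u2 z} hxS1 hxadj hu0S1 hu0A
  -- z2's unique neighbour
  obtain ⟨m, hmnbr⟩ := leaf_nbr hz2S.1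
  have hmadj : T.Adj z2 m := by
    have : m ∈ T.neighborSet z2 := by rw [hmnbr]; exact rfl
    exact this
  have hmleaf : ¬ IsLeaf T m := by
    intro hml
    exact not_adj_of_leaf_leaf htree.isConnected hcard hz2S.1 hml hmadj
  have hmne2 : m ≠ u2 := by
    intro he
    exact hz2A (by rw [← he]; exact hmadj.symm)
  have hz2ne2 : z2 ≠ u2 := leaf_ne_nonleaf hz2S.1 hu2
  have hz2ne3 : z2 ≠ u3 := leaf_ne_nonleaf hz2S.1 hu3
  have hmr : D.Reachable u2 m := by
    refine hz2S.2.trans (Adj.reachable ?_)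
    rw [hD, deleteEdges_adj]
    refine ⟨hmadj, ?_⟩
    simp only [Set.mem_singleton_iff, Sym2.eq_iff]
    push_neg
    exact ⟨fun h => absurd h hz2ne2, fun h => absurd h hz2ne3⟩
  have hm2 : T.Adj u2 m :=
    middle_adj htree hdeg hmax h23 h34 h45 (Ne.symm hd24) (Ne.symm hd25) (Ne.symm hd35) hmleaf hmne2 hmr
  -- C4 : u2 - z1 - z2 - m - u2
  have g1 : (T ⊔ C).Adj u2 z1 := Or.inl hz1A
  have g2 : (T ⊔ C).Adj z1 z2 := Or.inr hCadj
  have g3 : (T ⊔ C).Adj z2 m := Or.inl hmadj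
  have g4 : (T ⊔ C).Adj m u2 := Or.inl hm2.symm
  exact no_c4 hfree g1 g2 g3 g4 (Ne.symm hz2ne2) (leaf_ne_nonleaf hz1S.1 hmleaf)

private lemma middle_two [Fintype V] {T C : SimpleGraph V} (htree : T.IsTree)
    (hdeg : ∀ v : V, ¬ IsLeaf T v → 3 ≤ ncDeg T v)
    (hmax : ∀ (a b : V) (p : T.Walk a b), p.IsPath → p.length ≤ 5)
    (hfree : C4Free (T ⊔ C))
    {u2 u3 u4 u5 : V} (h23 : T.Adj u2 u3) (h34 : T.Adj u3 u4) (h45 : T.Adj u4 u5)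
    (h42 : u4 ≠ u2) (h52 : u5 ≠ u2) (h53 : u5 ≠ u3)
    {m : V} (hm : ¬ IsLeaf T m) (hmne : m ≠ u2)
    (hr : (T.deleteEdges {s(u2, u3)}).Reachable u2 m)
    (hplanar : (C.induce
      {x : V | IsLeaf T x ∧ (T.deleteEdges {s(m, u2)}).Reachable m x}).Connected) :
    {y : V | T.Adj m y ∧ y ≠ u2}.ncard = 2 := by
  classical
  have hset := middle_reach_set htree hdeg hmax h23 h34 h45 h42 h52 h53 hm hmne hr
  have hm2 : T.Adj u2 m := middle_adj htree hdeg hmax h23 h34 h45 h42 h52 h53 hm hmne hr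
  have hfin : {y : V | T.Adj m y ∧ y ≠ u2}.Finite := Set.toFinite _
  have heq : {y : V | T.Adj m y ∧ y ≠ u2} = T.neighborSet m \ {u2} := by
    ext y
    simp only [Set.mem_setOf_eq, Set.mem_diff, mem_neighborSet, Set.mem_singleton_iff]
  have hge : 2 ≤ {y : V | T.Adj m y ∧ y ≠ u2}.ncard := by
    rw [heq]
    rw [Set.ncard_diff_singleton_of_mem (show u2 ∈ T.neighborSet m from hm2.symm)]
    have := hdeg m hm
    have h3 : 3 ≤ (T.neighborSet m).ncard := this
    omega
  have hle : {y : V | T.Adj m y ∧ y ≠ u2}.ncard ≤ 2 := by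
    by_contra hgt
    push_neg at hgt
    obtain ⟨x, y, z, hxS, hyS, hzS, hxz, hCxy, hCyz⟩ := exists_mid hplanar
      (Set.toFinite _) (by rw [hset]; omega)
    rw [hset] at hxS hyS hzS
    have g1 : (T ⊔ C).Adj m x := Or.inl hxS.1
    have g2 : (T ⊔ C).Adj x y := Or.inr hCxy
    have g3 : (T ⊔ C).Adj y z := Or.inr hCyz
    have g4 : (T ⊔ C).Adj z m := Or.inl hzS.1.symm
    exact no_c4 hfree g1 g2 g3 g4 (fun he => hyS.1.ne (he.symm ▸ rfl)) hxz
  omega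

private lemma ncDeg_eq_degree [Fintype V] {G : SimpleGraph V} [DecidableRel G.Adj] (v : V) :
    ncDeg G v = G.degree v := by
  rw [ncDeg, Set.ncard_eq_toFinset_card']
  rfl

end Aux

/-- If every longest path of the characteristic tree of an `n`-vertex `C₄`-free Halin
graph has length exactly `5`, then `3 ∣ n - 2` and the graph has `5(n-2)/3 + 1`
edges. -/
theorem longest_path_five {V : Type*} [Fintype V] (H : HalinGraph V)
    (hfree : C4Free H.graph)
    (hex : ∃ (a b : V) (p : H.T.Walk a b), p.IsPath ∧ p.length = 5)
    (hmax : ∀ (a b : V) (p : H.T.Walk a b), p.IsPath → p.length ≤ 5) :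
    3 ∣ (Fintype.card V - 2) ∧ eCount H.graph = 5 * (Fintype.card V - 2) / 3 + 1 := by
  classical
  obtain ⟨a, b, p, hp, hl⟩ := hex
  have htree := H.tree_isTree
  have hdeg := H.nonleaf_degree
  have hcard4 := H.four_le_card
  have hcard3 : 3 ≤ Fintype.card V := by omega
  have hfree' : C4Free (H.T ⊔ H.C) := hfree
  cases p with
  | nil => simp at hl
  | cons h01 q =>
  rename_i u1
  cases q with
  | nil => simp at hl
  | cons h12 q =>
  rename_i u2
  cases q with
  | nil => simp at hl
  | cons h23 q =>
  rename_i u3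
  cases q with
  | nil => simp at hl
  | cons h34 q =>
  rename_i u4
  cases q with
  | nil => simp at hl
  | cons h45 q =>
  cases q with
  | cons h56 q => simp [Walk.length_cons] at hl
  | nil =>

  -- distinctness
  have hnd := hp.support_nodup
  simp only [Walk.support_cons, Walk.support_nil, List.nodup_cons, List.mem_cons,
    List.not_mem_nil, or_false, not_or, List.nodup_nil, and_true, not_false_eq_true] at hnd
  obtain ⟨⟨hd01, hd02, hd03, hd04, hd05⟩, ⟨hd12, hd13, hd14, hd15⟩,
    ⟨hd23, hd24, hd25⟩, ⟨hd34, hd35⟩, hd45⟩ := hnd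
  set T := H.T with hTdef
  set C := H.C with hCdef
  -- internal vertices on the path
  have hu1 : ¬ IsLeaf T u1 := not_leaf_of_two h12 h01.symm (Ne.symm hd02)
  have hu2 : ¬ IsLeaf T u2 := not_leaf_of_two h23 h12.symm (Ne.symm hd13)
  have hu3 : ¬ IsLeaf T u3 := not_leaf_of_two h34 h23.symm (Ne.symm hd24)
  have hu4 : ¬ IsLeaf T u4 := not_leaf_of_two h45 h34.symm (Ne.symm hd35)
  -- no leaf neighbours of the two centres
  have hC2 : ∀ x, IsLeaf T x → ¬ T.Adj u2 x :=
    center_no_leaf htree hdeg hmax hcard3 hfree' h01 h12 h23 h34 h45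
      (by simp only [List.nodup_cons, List.mem_cons, List.not_mem_nil, or_false, not_or,
            List.nodup_nil, and_true, not_false_eq_true]
          exact ⟨⟨hd01, hd02, hd03, hd04, hd05⟩, ⟨hd12, hd13, hd14, hd15⟩,
            ⟨hd23, hd24, hd25⟩, ⟨hd34, hd35⟩, hd45⟩)
      (H.planar u2 u3 h23)
  have hC3 : ∀ x, IsLeaf T x → ¬ T.Adj u3 x :=
    center_no_leaf htree hdeg hmax hcard3 hfree' h45.symm h34.symm h23.symm h12.symm h01.symm
      (by simp only [List.nodup_cons, List.mem_cons, List.not_mem_nil, or_false, not_or,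
            List.nodup_nil, and_true, not_false_eq_true]
          exact ⟨⟨Ne.symm hd45, Ne.symm hd35, Ne.symm hd25, Ne.symm hd15, Ne.symm hd05⟩,
            ⟨Ne.symm hd34, Ne.symm hd24, Ne.symm hd14, Ne.symm hd04⟩,
            ⟨Ne.symm hd23, Ne.symm hd13, Ne.symm hd03⟩, ⟨Ne.symm hd12, Ne.symm hd02⟩,
            Ne.symm hd01⟩)
      (H.planar u3 u2 h23.symm)
  -- classification of middle vertices
  have hDeq : T.deleteEdges ({s(u3, u2)} : Set (Sym2 V)) = T.deleteEdges {s(u2, u3)} := by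
    rw [Sym2.eq_swap]
  have hfiber : ∀ m, ¬ IsLeaf T m → m ≠ u2 → m ≠ u3 →
      ∃ c, ¬ IsLeaf T c ∧ T.Adj c m ∧ {y : V | T.Adj m y ∧ y ≠ c}.ncard = 2 ∧
        (∀ y, T.Adj m y → y ≠ c → IsLeaf T y) := by
    intro m hm hm2 hm3
    rcases reach_or_reach htree.isConnected (c1 := u2) (c2 := u3) m with hr | hr
    · have hadj : T.Adj u2 m := middle_adj htree hdeg hmax h23 h34 h45
        (Ne.symm hd24) (Ne.symm hd25) (Ne.symm hd35) hm hm2 hr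
      refine ⟨u2, hu2, hadj, ?_, ?_⟩
      · exact middle_two htree hdeg hmax hfree' h23 h34 h45
          (Ne.symm hd24) (Ne.symm hd25) (Ne.symm hd35) hm hm2 hr (H.planar m u2 hadj.symm)
      · exact fun y hy hyne => middle_nbrs_leaf htree hdeg hmax h23 h34 h45
          (Ne.symm hd24) (Ne.symm hd25) (Ne.symm hd35) hm hm2 hr hy hyne
    · have hr' : (T.deleteEdges {s(u3, u2)}).Reachable u3 m := by rw [hDeq]; exact hr
      have hadj : T.Adj u3 m := middle_adj htree hdeg hmax h23.symm h12.symm h01.symm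
        hd13 hd03 hd02 hm hm3 hr'
      refine ⟨u3, hu3, hadj, ?_, ?_⟩
      · exact middle_two htree hdeg hmax hfree' h23.symm h12.symm h01.symm
          hd13 hd03 hd02 hm hm3 hr' (H.planar m u3 hadj.symm)
      · exact fun y hy hyne => middle_nbrs_leaf htree hdeg hmax h23.symm h12.symm h01.symm
          hd13 hd03 hd02 hm hm3 hr' hy hyne
  -- the leaf-to-neighbour map
  set f : V → V := fun z => if h : ∃ y, T.Adj z y then h.choose else z with hfdef
  have hfadj : ∀ z, IsLeaf T z → T.Adj z (f z) := by
    intro z hz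
    obtain ⟨m₀, hs⟩ := leaf_nbr hz
    have hex' : ∃ y, T.Adj z y := ⟨m₀, by
      have : m₀ ∈ T.neighborSet z := by rw [hs]; exact rfl
      exact this⟩
    simp only [hfdef, dif_pos hex']
    exact hex'.choose_spec
  have hfuniq : ∀ z y, IsLeaf T z → T.Adj z y → f z = y := by
    intro z y hz hy
    exact leaf_unique hz hy (hfadj z hz)
  set Lf : Finset V := Finset.univ.filter (fun v => IsLeaf T v) with hLf
  set M : Finset V := Finset.univ.filter (fun v => ¬ IsLeaf T v ∧ v ≠ u2 ∧ v ≠ u3) with hM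
  have hfM : ∀ z ∈ Lf, f z ∈ M := by
    intro z hz
    rw [hLf, Finset.mem_filter] at hz
    have hzleaf := hz.2
    have hadj := hfadj z hzleaf
    rw [hM, Finset.mem_filter]
    refine ⟨Finset.mem_univ _, ?_, ?_, ?_⟩
    · intro hfl
      exact not_adj_of_leaf_leaf htree.isConnected hcard3 hzleaf hfl hadj
    · intro he
      exact hC2 z hzleaf (he ▸ hadj).symm
    · intro he
      exact hC3 z hzleaf (he ▸ hadj).symm
  have hsum : Lf.card = ∑ m ∈ M, (Lf.filter (fun z => f z = m)).card :=
    Finset.card_eq_sum_card_fiberwise hfM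
  have hfib2 : ∀ m ∈ M, (Lf.filter (fun z => f z = m)).card = 2 := by
    intro m hm
    rw [hM, Finset.mem_filter] at hm
    obtain ⟨-, hmL, hm2, hm3⟩ := hm
    obtain ⟨c, hcint, hcadj, hcn, hcl⟩ := hfiber m hmL hm2 hm3
    have hseteq : ((Lf.filter (fun z => f z = m)) : Set V) = {y : V | T.Adj m y ∧ y ≠ c} := by
      ext z
      simp only [Finset.coe_filter, Set.mem_setOf_eq, hLf, Finset.mem_filter, Finset.mem_univ,
        true_and]
      constructor
      · rintro ⟨hzleaf, hfz⟩
        have : T.Adj z m := hfz ▸ hfadj z hzleaf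
        exact ⟨this.symm, leaf_ne_nonleaf hzleaf hcint⟩
      · rintro ⟨hadj, hne⟩
        have hzleaf := hcl z hadj hne
        exact ⟨hzleaf, hfuniq z m hzleaf hadj.symm⟩
    rw [← Set.ncard_coe_finset, hseteq, hcn]
  have hLM : Lf.card = 2 * M.card := by
    rw [hsum, Finset.sum_congr rfl hfib2]
    simp [Finset.sum_const, mul_comm]
  -- partition of the vertices
  have hpart : Lf.card + (Finset.univ.filter (fun v => ¬ IsLeaf T v)).card = Fintype.card V := by
    rw [hLf]
    exact Finset.card_filter_add_card_filter_not _
  have hMeq : (Finset.univ.filter (fun v => ¬ IsLeaf T v)) = M ∪ {u2, u3} := by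
    ext v
    rw [hM]
    simp only [Finset.mem_filter, Finset.mem_univ, true_and, Finset.mem_union,
      Finset.mem_insert, Finset.mem_singleton]
    constructor
    · intro hv
      by_cases h2 : v = u2
      · exact Or.inr (Or.inl h2)
      by_cases h3 : v = u3
      · exact Or.inr (Or.inr h3)
      exact Or.inl ⟨hv, h2, h3⟩
    · rintro (⟨hv, -, -⟩ | h2 | h3)
      · exact hv
      · exact h2 ▸ hu2
      · exact h3 ▸ hu3
  have hMcard : (Finset.univ.filter (fun v => ¬ IsLeaf T v)).card = M.card + 2 := by
    rw [hMeq, Finset.card_union_of_disjoint, Finset.card_pair hd23]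
    rw [Finset.disjoint_right]
    intro v hv hvM
    rw [hM, Finset.mem_filter] at hvM
    simp only [Finset.mem_insert, Finset.mem_singleton] at hv
    rcases hv with h | h
    · exact hvM.2.2.1 h
    · exact hvM.2.2.2 h
  have hn : Fintype.card V = 3 * M.card + 2 := by omega
  -- edge counts
  have hTedge : T.edgeFinset.card + 1 = Fintype.card V := htree.card_edgeFinset
  letI : DecidableRel C.Adj := fun _ _ => Classical.propDecidable _
  -- degree of C
  have hdegC : ∀ v : V, C.degree v = if IsLeaf T v then 2 else 0 := by
    intro v
    by_cases hv : IsLeaf T v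
    · rw [if_pos hv]
      have hsupp : v ∈ C.support := by
        rw [hCdef, H.support_C]
        exact hv
      have h2r := H.two_regular v hsupp
      rw [← h2r, ncDeg_eq_degree]
    · rw [if_neg hv, ← ncDeg_eq_degree, ncDeg,
        Set.ncard_eq_zero (Set.toFinite _)]
      ext w
      simp only [mem_neighborSet, Set.mem_empty_iff_false, iff_false]
      intro hadj
      apply hv
      have : v ∈ C.support := ⟨w, hadj⟩
      rw [hCdef, H.support_C] at this
      exact this
  have hCedge : C.edgeFinset.card = Lf.card := by
    have hhand := C.sum_degrees_eq_twice_card_edges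
    have hsplit := Finset.sum_filter_add_sum_filter_not Finset.univ
      (fun v => IsLeaf T v) (fun v => C.degree v)
    have h1 : ∑ v ∈ Finset.univ.filter (fun v => IsLeaf T v), C.degree v = 2 * Lf.card := by
      rw [Finset.sum_congr rfl (fun v hv => by
        rw [hdegC v, if_pos (Finset.mem_filter.mp hv).2])]
      rw [hLf]
      simp [Finset.sum_const, mul_comm]
    have h2 : ∑ v ∈ Finset.univ.filter (fun v => ¬ IsLeaf T v), C.degree v = 0 := by
      rw [Finset.sum_congr rfl (fun v hv => by
        rw [hdegC v, if_neg (Finset.mem_filter.mp hv).2])]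
      simp
    rw [h1, h2] at hsplit
    rw [hhand] at hsplit
    omega
  -- disjointness of tree and cycle edges
  have hdisj : Disjoint T.edgeSet C.edgeSet := by
    rw [Set.disjoint_left]
    intro e heT heC
    induction e with
    | _ x y =>
      rw [mem_edgeSet] at heT heC
      have hx : x ∈ C.support := ⟨y, heC⟩
      have hy : y ∈ C.support := ⟨x, heC.symm⟩
      rw [hCdef, H.support_C] at hx hy
      exact not_adj_of_leaf_leaf htree.isConnected hcard3 hx hy heT
  have hecount : eCount H.graph = T.edgeFinset.card + C.edgeFinset.card := by
    have hgr : H.graph = T ⊔ C := rfl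
    rw [eCount, hgr, edgeSet_sup, Set.ncard_union_eq hdisj (Set.toFinite _) (Set.toFinite _)]
    rw [Set.ncard_eq_toFinset_card', Set.ncard_eq_toFinset_card']
    congr 1 <;> convert rfl
  -- final arithmetic
  have hdvd : Fintype.card V - 2 = 3 * M.card := by omega
  constructor
  · exact ⟨M.card, hdvd⟩
  · have hTcard : T.edgeFinset.card = 3 * M.card + 1 := by omega
    rw [hecount, hTcard, hCedge, hLM, hdvd,
      show 5 * (3 * M.card) = 5 * M.card * 3 by ring, Nat.mul_div_cancel _ (by norm_num : 0 < 3)]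
    omega
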